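/- Let 0 < ν < √(3/2) and let A be the soliton on finite background, and let τ̂ ∈ ℝ satisfy A(0,τ̂) = 0. Then the local wavenumber of the SFB wave field is unbounded at the singular point: the function τ ↦ Im(conj(A(0,τ))·(∂ξA)(0,τ))/|A(0,τ)|², defined for τ near τ̂ with A(0,τ) ≠ 0, is unbounded as τ → τ̂. Consequently the Chu–Mei quotient of the SFB is unbounded at its singular points. -/

import Mathlib

open Real Filter Topology

/-- Benjamin–Feir growth rate `σ = ν√(2−ν²)`. -/
noncomputable def sfbSigma (ν : ℝ) : ℝ := ν * Real.sqrt (2 - ν ^ 2)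

/-- Displaced amplitude `G(ξ,τ) = P(ξ)/(Q(ξ) − σ cos(ντ))` of the SFB, with
`P(ξ) = ν√2·√(2ν²cosh²(σξ) − σ²)` and `Q(ξ) = ν√2·cosh(σξ)`. -/
noncomputable def sfbG (ν ξ τ : ℝ) : ℝ :=
  (ν * Real.sqrt 2 * Real.sqrt (2 * ν ^ 2 * Real.cosh (sfbSigma ν * ξ) ^ 2 - sfbSigma ν ^ 2)) /
  (ν * Real.sqrt 2 * Real.cosh (sfbSigma ν * ξ) - sfbSigma ν * Real.cos (ν * τ))

/-- SFB phase `φ(ξ) = arctan(−(σ/ν²) tanh(σξ))`. -/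
noncomputable def sfbPhi (ν ξ : ℝ) : ℝ :=
  Real.arctan (-(sfbSigma ν / ν ^ 2) * Real.tanh (sfbSigma ν * ξ))

/-- The soliton on finite background: `A(ξ,τ) = e^{−iξ}(G(ξ,τ)e^{iφ(ξ)} − 1)`. -/
noncomputable def sfbA (ν ξ τ : ℝ) : ℂ :=
  Complex.exp (-Complex.I * (ξ : ℂ)) *
    ((sfbG ν ξ τ : ℂ) * Complex.exp (Complex.I * (sfbPhi ν ξ : ℂ)) - 1)

lemma sfb_aux_phi0 (ν : ℝ) : sfbPhi ν 0 = 0 := by simp [sfbPhi]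

lemma sfb_aux_deriv (ν : ℝ) (hν0 : 0 < ν) (hν2 : ν ^ 2 < 2) (τ : ℝ)
    (hden : ν * Real.sqrt 2 * Real.cosh (sfbSigma ν * 0) - sfbSigma ν * Real.cos (ν * τ) ≠ 0) :
    HasDerivAt (fun x => sfbA ν x τ)
      (Complex.I * ((1 - sfbG ν 0 τ - sfbG ν 0 τ * (sfbSigma ν ^ 2 / ν ^ 2) : ℝ) : ℂ)) 0 := by
  set σ := sfbSigma ν with hσdef
  have hσsq : σ ^ 2 = ν ^ 2 * (2 - ν ^ 2) := by
    rw [hσdef, sfbSigma, mul_pow, Real.sq_sqrt (by linarith)]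
  have hlin : HasDerivAt (fun ξ : ℝ => σ * ξ) σ 0 := by
    simpa using (hasDerivAt_id (0:ℝ)).const_mul σ
  have hcosh : HasDerivAt (fun ξ : ℝ => Real.cosh (σ * ξ)) 0 0 := by
    have := (Real.hasDerivAt_cosh (σ * 0)).comp 0 hlin
    simpa [Function.comp_def] using this
  have hu : HasDerivAt (fun ξ : ℝ => 2 * ν ^ 2 * Real.cosh (σ * ξ) ^ 2 - σ ^ 2) 0 0 := by
    have h1 : HasDerivAt (fun ξ : ℝ => Real.cosh (σ * ξ) ^ 2)
        (2 * Real.cosh (σ * 0) ^ 1 * 0) 0 := hcosh.pow 2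
    have := (h1.const_mul (2 * ν ^ 2)).sub_const (σ ^ 2)
    simpa using this
  have hu0 : 2 * ν ^ 2 * Real.cosh (σ * 0) ^ 2 - σ ^ 2 = (ν ^ 2) ^ 2 := by
    simp [hσsq]; ring
  have hu0ne : 2 * ν ^ 2 * Real.cosh (σ * 0) ^ 2 - σ ^ 2 ≠ 0 := by
    rw [hu0]; positivity
  have hsqrt : HasDerivAt
      (fun ξ : ℝ => Real.sqrt (2 * ν ^ 2 * Real.cosh (σ * ξ) ^ 2 - σ ^ 2)) 0 0 := by
    have := (Real.hasDerivAt_sqrt hu0ne).comp 0 hu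
    simpa [Function.comp_def] using this
  have hP : HasDerivAt
      (fun ξ : ℝ => ν * Real.sqrt 2 * Real.sqrt (2 * ν ^ 2 * Real.cosh (σ * ξ) ^ 2 - σ ^ 2)) 0 0 := by
    simpa using hsqrt.const_mul (ν * Real.sqrt 2)
  have hD : HasDerivAt
      (fun ξ : ℝ => ν * Real.sqrt 2 * Real.cosh (σ * ξ) - σ * Real.cos (ν * τ)) 0 0 := by
    simpa using (hcosh.const_mul (ν * Real.sqrt 2)).sub_const (σ * Real.cos (ν * τ))
  have hG : HasDerivAt (fun ξ => sfbG ν ξ τ) 0 0 := by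
    have := hP.div hD hden
    simpa [sfbG, Pi.div_def, hσdef] using this
  have hcosh0 : Real.cosh (σ * 0) ≠ 0 := by positivity
  have htanh : HasDerivAt (fun ξ : ℝ => Real.tanh (σ * ξ)) σ 0 := by
    have hsinh : HasDerivAt (fun ξ : ℝ => Real.sinh (σ * ξ)) (Real.cosh (σ * 0) * σ) 0 :=
      (Real.hasDerivAt_sinh (σ * 0)).comp 0 hlin
    have hcosh' : HasDerivAt (fun ξ : ℝ => Real.cosh (σ * ξ)) (Real.sinh (σ * 0) * σ) 0 :=
      (Real.hasDerivAt_cosh (σ * 0)).comp 0 hlin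
    have hdiv := hsinh.div hcosh' hcosh0
    have heq : (fun ξ : ℝ => Real.tanh (σ * ξ)) =
        fun ξ : ℝ => Real.sinh (σ * ξ) / Real.cosh (σ * ξ) :=
      funext fun ξ => Real.tanh_eq_sinh_div_cosh _
    rw [heq]
    exact hdiv.congr_deriv (by simp)
  have hφ : HasDerivAt (fun ξ => sfbPhi ν ξ) (-(σ ^ 2 / ν ^ 2)) 0 := by
    have hinner : HasDerivAt (fun ξ : ℝ => -(σ / ν ^ 2) * Real.tanh (σ * ξ))
        (-(σ / ν ^ 2) * σ) 0 := htanh.const_mul _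
    have harc := (Real.hasDerivAt_arctan (-(σ / ν ^ 2) * Real.tanh (σ * 0))).comp 0 hinner
    have h2 : HasDerivAt (fun ξ : ℝ => Real.arctan (-(σ / ν ^ 2) * Real.tanh (σ * ξ)))
        (-(σ ^ 2 / ν ^ 2)) 0 := by
      exact harc.congr_deriv (by simp; ring)
    exact h2
  have hφC : HasDerivAt (fun ξ : ℝ => (sfbPhi ν ξ : ℂ)) ((-(σ ^ 2 / ν ^ 2) : ℝ) : ℂ) 0 :=
    hφ.ofReal_comp
  have hexpφ : HasDerivAt (fun ξ : ℝ => Complex.exp (Complex.I * (sfbPhi ν ξ : ℂ)))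
      (Complex.I * ((-(σ ^ 2 / ν ^ 2) : ℝ) : ℂ)) 0 := by
    have := (hφC.const_mul Complex.I).cexp
    simpa [sfb_aux_phi0] using this
  have hGC : HasDerivAt (fun ξ : ℝ => ((sfbG ν ξ τ : ℝ) : ℂ)) ((0:ℝ):ℂ) 0 := hG.ofReal_comp
  have hprod : HasDerivAt
      (fun ξ : ℝ => ((sfbG ν ξ τ : ℝ) : ℂ) * Complex.exp (Complex.I * (sfbPhi ν ξ : ℂ)) - 1)
      (((0:ℝ):ℂ) * Complex.exp (Complex.I * (sfbPhi ν 0 : ℂ)) +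
        ((sfbG ν 0 τ : ℝ) : ℂ) * (Complex.I * ((-(σ ^ 2 / ν ^ 2) : ℝ) : ℂ))) 0 :=
    (hGC.mul hexpφ).sub_const 1
  have hexp1 : HasDerivAt (fun ξ : ℝ => Complex.exp (-Complex.I * (ξ : ℂ))) (-Complex.I) 0 := by
    have hor : HasDerivAt (fun ξ : ℝ => (ξ : ℂ)) 1 0 := by
      simpa using (hasDerivAt_id (0:ℝ)).ofReal_comp
    have hin : HasDerivAt (fun ξ : ℝ => -Complex.I * (ξ : ℂ)) (-Complex.I) 0 := by
      simpa using hor.const_mul (-Complex.I)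
    have := hin.cexp
    simpa using this
  have hA := hexp1.mul hprod
  have : (fun x => sfbA ν x τ) = fun ξ : ℝ => Complex.exp (-Complex.I * (ξ : ℂ)) *
      (((sfbG ν ξ τ : ℝ) : ℂ) * Complex.exp (Complex.I * (sfbPhi ν ξ : ℂ)) - 1) := rfl
  rw [this]
  exact hA.congr_deriv (by simp [sfb_aux_phi0]; push_cast; ring)

/-- For `0 < ν < √(3/2)` and a singular point `A(0,τ₀) = 0` of the SFB,
the local wavenumber `k(τ) = Im(conj(A(0,τ))·(∂ξA)(0,τ))/|A(0,τ)|²` (defined where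
`A(0,τ) ≠ 0`) is unbounded as `τ → τ₀`: for every bound `M` there are points `τ`
arbitrarily close to (but different from) `τ₀` where `|k(τ)| > M`. Consequently the
Chu–Mei quotient of the SFB is unbounded at its singular points. -/
theorem sfb_local_wavenumber_unbounded
    (ν : ℝ) (hν0 : 0 < ν) (hν2 : ν < Real.sqrt (3 / 2))
    (τ₀ : ℝ) (hsing : sfbA ν 0 τ₀ = 0) :
    ∀ M : ℝ, ∃ᶠ τ in 𝓝[≠] τ₀,
      M < |((starRingEnd ℂ) (sfbA ν 0 τ) * deriv (fun x => sfbA ν x τ) 0).im| /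
            ‖sfbA ν 0 τ‖ ^ 2 := by
  intro M
  set σ := sfbSigma ν with hσdef
  have h32 : ν ^ 2 < 3 / 2 := (Real.lt_sqrt hν0.le).mp hν2
  have hν22 : ν ^ 2 < 2 := by linarith
  have hσsq : σ ^ 2 = ν ^ 2 * (2 - ν ^ 2) := by
    rw [hσdef, sfbSigma, mul_pow, Real.sq_sqrt (by linarith)]
  have hσpos : 0 < σ := by
    rw [hσdef, sfbSigma]
    exact mul_pos hν0 (Real.sqrt_pos.mpr (by linarith))
  have hσlt : σ < ν * Real.sqrt 2 := by
    rw [hσdef, sfbSigma]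
    have hx : 0 < ν ^ 2 := by positivity
    exact mul_lt_mul_of_pos_left (Real.sqrt_lt_sqrt (by linarith) (by linarith)) hν0
  have hden : ∀ τ : ℝ, 0 < ν * Real.sqrt 2 - σ * Real.cos (ν * τ) := by
    intro τ
    have h1 : σ * Real.cos (ν * τ) ≤ σ := by
      nlinarith [Real.cos_le_one (ν * τ), hσpos]
    linarith
  have hg : ∀ τ : ℝ, sfbG ν 0 τ =
      ν * Real.sqrt 2 * ν ^ 2 / (ν * Real.sqrt 2 - σ * Real.cos (ν * τ)) := by
    intro τ
    have h1 : 2 * ν ^ 2 * Real.cosh (σ * 0) ^ 2 - σ ^ 2 = (ν ^ 2) ^ 2 := by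
      simp [hσsq]; ring
    rw [sfbG, ← hσdef, h1, Real.sqrt_sq (by positivity)]
    simp
  have hA0 : ∀ τ : ℝ, sfbA ν 0 τ = ((sfbG ν 0 τ - 1 : ℝ) : ℂ) := by
    intro τ
    rw [sfbA, sfb_aux_phi0]
    push_cast
    simp
  have hg0 : sfbG ν 0 τ₀ = 1 := by
    have h := hA0 τ₀
    rw [hsing] at h
    have h2 := Complex.ofReal_eq_zero.mp h.symm
    linarith
  have hcos0 : σ * Real.cos (ν * τ₀) = ν * Real.sqrt 2 * (1 - ν ^ 2) := by
    have h1 := hg τ₀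
    rw [hg0] at h1
    have d2 := (hden τ₀).ne'
    field_simp at h1
    nlinarith [h1]
  have hsin : Real.sin (ν * τ₀) ≠ 0 := by
    intro h
    have hc2 : Real.cos (ν * τ₀) ^ 2 = 1 := by
      have := Real.sin_sq_add_cos_sq (ν * τ₀)
      rw [h] at this; simpa using this
    have hsq : (σ * Real.cos (ν * τ₀)) ^ 2 = (ν * Real.sqrt 2 * (1 - ν ^ 2)) ^ 2 := by
      rw [hcos0]
    have h2 : Real.sqrt 2 ^ 2 = 2 := Real.sq_sqrt (by norm_num)
    rw [mul_pow, mul_pow, mul_pow, h2, hc2, hσsq] at hsq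
    have hx : 0 < ν ^ 2 := by positivity
    have e2 : 2 - ν ^ 2 = 2 * (1 - ν ^ 2) ^ 2 := by
      have := hsq
      nlinarith [this, hx]
    nlinarith [e2, h32, hx]
  have hcosderiv : HasDerivAt (fun τ : ℝ => Real.cos (ν * τ)) (-Real.sin (ν * τ₀) * ν) τ₀ := by
    have hlin : HasDerivAt (fun τ : ℝ => ν * τ) ν τ₀ := by
      simpa using (hasDerivAt_id τ₀).const_mul ν
    simpa [Function.comp_def] using (Real.hasDerivAt_cos (ν * τ₀)).comp τ₀ hlin
  have Ecos : ∀ᶠ τ in 𝓝[≠] τ₀, Real.cos (ν * τ) ≠ Real.cos (ν * τ₀) :=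
    hcosderiv.eventually_ne (by simp [hsin, hν0.ne'])
  have Ene : ∀ᶠ τ in 𝓝[≠] τ₀, sfbG ν 0 τ ≠ 1 := by
    filter_upwards [Ecos] with τ hτ hg1
    apply hτ
    have h1 := hg τ
    have h2 := hg τ₀
    rw [hg1] at h1
    rw [hg0] at h2
    have d1 := (hden τ).ne'
    have d2 := (hden τ₀).ne'
    field_simp at h1 h2
    have : σ * Real.cos (ν * τ) = σ * Real.cos (ν * τ₀) := by linarith
    exact mul_left_cancel₀ hσpos.ne' this
  have hgc : ContinuousAt (fun τ => sfbG ν 0 τ) τ₀ := by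
    have hc : Continuous fun τ : ℝ =>
        ν * Real.sqrt 2 * ν ^ 2 / (ν * Real.sqrt 2 - σ * Real.cos (ν * τ)) := by
      apply continuous_const.div
      · exact continuous_const.sub (continuous_const.mul (Real.continuous_cos.comp (continuous_const.mul continuous_id)))
      · intro τ; exact (hden τ).ne'
    have he : (fun τ => sfbG ν 0 τ)
        = fun τ => ν * Real.sqrt 2 * ν ^ 2 / (ν * Real.sqrt 2 - σ * Real.cos (ν * τ)) :=
      funext hg
    rw [he]
    exact hc.continuousAt
  set r : ℝ := σ ^ 2 / ν ^ 2 with hrdef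
  have hr : 0 < r := by
    rw [hrdef]; positivity
  have hgt : Tendsto (fun τ => sfbG ν 0 τ) (𝓝[≠] τ₀) (𝓝 1) := by
    have h := hgc.tendsto
    rw [hg0] at h
    exact h.mono_left nhdsWithin_le_nhds
  have hnum : Tendsto (fun τ => |1 - sfbG ν 0 τ - sfbG ν 0 τ * r|) (𝓝[≠] τ₀) (𝓝 r) := by
    have h1 : Tendsto (fun τ => 1 - sfbG ν 0 τ - sfbG ν 0 τ * r) (𝓝[≠] τ₀)
        (𝓝 (1 - 1 - 1 * r)) :=
      (tendsto_const_nhds.sub hgt).sub (hgt.mul tendsto_const_nhds)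
    have h2 := h1.abs
    have h3 : |1 - 1 - 1 * r| = r := by
      rw [abs_of_nonpos (by linarith)]; ring
    rwa [h3] at h2
  have E2 : ∀ᶠ τ in 𝓝[≠] τ₀, r / 2 < |1 - sfbG ν 0 τ - sfbG ν 0 τ * r| :=
    hnum.eventually (eventually_gt_nhds (by linarith))
  set δ : ℝ := r / (2 * (|M| + 1)) with hδdef
  have hM1 : (0:ℝ) < |M| + 1 := by positivity
  have hδpos : 0 < δ := by
    rw [hδdef]; positivity
  have E3 : ∀ᶠ τ in 𝓝[≠] τ₀, |sfbG ν 0 τ - 1| < δ := by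
    have h1 : Tendsto (fun τ => |sfbG ν 0 τ - 1|) (𝓝[≠] τ₀) (𝓝 |(1:ℝ) - 1|) :=
      (hgt.sub tendsto_const_nhds).abs
    simp only [sub_self, abs_zero] at h1
    exact h1.eventually (eventually_lt_nhds hδpos)
  have him : ∀ x y : ℝ, ((starRingEnd ℂ) (x:ℂ) * (Complex.I * (y:ℂ))).im = x * y := by
    intro x y
    simp [Complex.conj_ofReal, Complex.mul_im, Complex.mul_re]
  have key : ∀ᶠ τ in 𝓝[≠] τ₀,
      M < |((starRingEnd ℂ) (sfbA ν 0 τ) * deriv (fun x => sfbA ν x τ) 0).im| /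
            ‖sfbA ν 0 τ‖ ^ 2 := by
    filter_upwards [Ene, E2, E3] with τ h1 h2 h3
    have hdne : ν * Real.sqrt 2 * Real.cosh (sfbSigma ν * 0) - sfbSigma ν * Real.cos (ν * τ) ≠ 0 := by
      have := hden τ
      rw [← hσdef]
      simp only [mul_zero, Real.cosh_zero, mul_one]
      linarith
    have hder := (sfb_aux_deriv ν hν0 hν22 τ hdne).deriv
    rw [← hσdef, ← hrdef] at hder
    rw [hder, hA0 τ, him]
    have hnorm : ‖((sfbG ν 0 τ - 1 : ℝ) : ℂ)‖ ^ 2 = (sfbG ν 0 τ - 1) ^ 2 := by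
      rw [Complex.norm_real, Real.norm_eq_abs, sq_abs]
    rw [hnorm]
    have hne : sfbG ν 0 τ - 1 ≠ 0 := sub_ne_zero.mpr h1
    have habs : 0 < |sfbG ν 0 τ - 1| := abs_pos.mpr hne
    have hfrac : |(sfbG ν 0 τ - 1) * (1 - sfbG ν 0 τ - sfbG ν 0 τ * r)| / (sfbG ν 0 τ - 1) ^ 2
        = |1 - sfbG ν 0 τ - sfbG ν 0 τ * r| / |sfbG ν 0 τ - 1| := by
      rw [abs_mul, ← sq_abs, pow_two, mul_div_mul_left _ _ (ne_of_gt habs)]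
    rw [hfrac, lt_div_iff₀ habs]
    have hMa : M ≤ |M| := le_abs_self M
    have hδr : (|M| + 1) * δ = r / 2 := by
      rw [hδdef]; field_simp
    have f1 : M * |sfbG ν 0 τ - 1| ≤ |M| * |sfbG ν 0 τ - 1| :=
      mul_le_mul_of_nonneg_right hMa (abs_nonneg _)
    have f2 : |M| * |sfbG ν 0 τ - 1| ≤ |M| * δ :=
      mul_le_mul_of_nonneg_left h3.le (abs_nonneg M)
    linarith
  exact key.frequently
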